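/- For every integer r ≥ 1, set m = 2^r − 1 and R = 1/(X^m − 1) ∈ RatFunc ℂ. Then 𝔉^{(r)}(R) = R, while 𝔉^{(k)}(R) ≠ R for every k with 1 ≤ k < r. Hence 𝔉 has, for every r ≥ 1, a periodic orbit of exact length r. -/

import Mathlib

/-- The `n`-th coefficient of the Laurent expansion at `0` of a rational function. -/
noncomputable def coeffL (R : RatFunc ℂ) (n : ℤ) : ℂ :=
  ((R : LaurentSeries ℂ)).coeff n

open PowerSeries in
lemma ps_inv (m : ℕ) (hm : 1 ≤ m) :
    ((X : PowerSeries ℂ)^m - 1) * PowerSeries.mk (fun n => if m ∣ n then (-1 : ℂ) else 0) = 1 := by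
  ext n
  rw [sub_mul, one_mul, map_sub, coeff_X_pow_mul', PowerSeries.coeff_one]
  simp only [PowerSeries.coeff_mk]
  rcases Nat.eq_zero_or_pos n with rfl | hn
  · have h0 : ¬ m = 0 := by omega
    simp [h0, Nat.le_zero]
  · rw [if_neg (by omega : ¬ n = 0)]
    by_cases h : m ≤ n
    · rw [if_pos h]
      have : m ∣ n - m ↔ m ∣ n :=
        ⟨fun hd => by have := Nat.dvd_add hd (dvd_refl m); rwa [Nat.sub_add_cancel h] at this,
         fun hd => Nat.dvd_sub hd dvd_rfl⟩
      by_cases h2 : m ∣ n <;> simp [this, h2]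
    · rw [if_neg h, if_neg (fun hd => h (Nat.le_of_dvd hn hd))]
      ring

lemma coeffL_R (m : ℕ) (hm : 1 ≤ m) (n : ℤ) :
    coeffL (1 / (RatFunc.X ^ m - 1)) n
      = if 0 ≤ n ∧ (m : ℤ) ∣ n then (-1 : ℂ) else 0 := by
  set T : PowerSeries ℂ := PowerSeries.mk (fun n => if m ∣ n then (-1 : ℂ) else 0) with hT
  have h1 : (((RatFunc.X ^ m - 1 : RatFunc ℂ)) : LaurentSeries ℂ) * (T : LaurentSeries ℂ) = 1 := by
    have := congrArg (HahnSeries.ofPowerSeries ℤ ℂ) (ps_inv m hm)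
    simp only [map_mul, map_sub, map_pow, map_one, HahnSeries.ofPowerSeries_X] at this
    rw [map_sub, map_pow, RatFunc.coe_X, RingHom.map_one]
    exact this
  have h2 : ((1 / (RatFunc.X ^ m - 1) : RatFunc ℂ) : LaurentSeries ℂ) = (T : LaurentSeries ℂ) := by
    rw [map_div₀, map_one, one_div]
    exact inv_eq_of_mul_eq_one_right h1
  rw [coeffL, h2, PowerSeries.coeff_coe]
  by_cases hn : n < 0
  · rw [if_pos hn, if_neg (fun h => absurd h.1 (not_le.mpr hn))]
  · rw [if_neg hn, hT, PowerSeries.coeff_mk]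
    have hna : ((n.natAbs : ℤ)) = n := Int.natAbs_of_nonneg (not_lt.mp hn)
    by_cases hd : (m : ℤ) ∣ n
    · rw [if_pos (Int.natCast_dvd_natCast.mp (by rwa [hna])), if_pos ⟨not_lt.mp hn, hd⟩]
    · rw [if_neg (fun hc => hd (by rw [← hna]; exact Int.natCast_dvd_natCast.mpr hc)),
        if_neg (by tauto)]

lemma iter_coeff (F : RatFunc ℂ → RatFunc ℂ)
    (hF : ∀ R : RatFunc ℂ, ∀ k : ℤ, coeffL (F R) k = coeffL R (2 * k + 1)) :
    ∀ (k : ℕ) (R : RatFunc ℂ) (n : ℤ),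
      coeffL (F^[k] R) n = coeffL R (2^k * (n + 1) - 1) := by
  intro k
  induction k with
  | zero => intro R n; norm_num
  | succ k ih =>
    intro R n
    rw [Function.iterate_succ_apply', hF, ih]
    congr 1
    ring

theorem stmt_8 (F : RatFunc ℂ → RatFunc ℂ)
    (hF : ∀ R : RatFunc ℂ, ∀ k : ℤ, coeffL (F R) k = coeffL R (2 * k + 1))
    (r : ℕ) (hr : 1 ≤ r) :
    F^[r] (1 / (RatFunc.X ^ (2 ^ r - 1) - 1)) = 1 / (RatFunc.X ^ (2 ^ r - 1) - 1) ∧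
    ∀ k : ℕ, 1 ≤ k → k < r →
      F^[k] (1 / (RatFunc.X ^ (2 ^ r - 1) - 1)) ≠ 1 / (RatFunc.X ^ (2 ^ r - 1) - 1) := by
  set m : ℕ := 2 ^ r - 1 with hmdef
  have h2r : 2 ≤ 2 ^ r := by
    calc 2 = 2 ^ 1 := by norm_num
    _ ≤ 2 ^ r := Nat.pow_le_pow_right (by norm_num) hr
  have hm : 1 ≤ m := by omega
  set R : RatFunc ℂ := 1 / (RatFunc.X ^ m - 1) with hR
  have hM : ((m : ℤ)) = 2 ^ r - 1 := by
    have : (2:ℤ)^r = ((2^r : ℕ) : ℤ) := by norm_cast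
    omega
  have hM1 : (1:ℤ) ≤ (m:ℤ) := by exact_mod_cast hm
  constructor
  · refine RingHom.injective _ (?_ : ((F^[r] R : RatFunc ℂ) : LaurentSeries ℂ) = (R : LaurentSeries ℂ))
    apply HahnSeries.ext
    funext n
    have h1 : coeffL (F^[r] R) n = coeffL R ((2:ℤ)^r * (n + 1) - 1) := iter_coeff F hF r R n
    have e1 : (2:ℤ)^r * (n + 1) - 1 = (m:ℤ) * (n + 1) + n := by rw [hM]; ring
    have key : (0 ≤ (2:ℤ)^r * (n + 1) - 1 ∧ (m:ℤ) ∣ (2:ℤ)^r * (n + 1) - 1)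
        ↔ (0 ≤ n ∧ (m:ℤ) ∣ n) := by
      rw [e1]
      constructor
      · rintro ⟨h0, hd⟩
        refine ⟨by nlinarith, ?_⟩
        exact (dvd_add_right (Dvd.intro _ rfl)).mp hd
      · rintro ⟨h0, hd⟩
        refine ⟨by nlinarith, (dvd_add_right (Dvd.intro _ rfl)).mpr hd⟩
    have : coeffL (F^[r] R) n = coeffL R n := by
      rw [h1, coeffL_R m hm, coeffL_R m hm, if_congr key rfl rfl]
    exact this
  · intro k hk1 hkr heq
    have h1 : coeffL (F^[k] R) 0 = coeffL R ((2:ℤ)^k * (0 + 1) - 1) := iter_coeff F hF k R 0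
    rw [heq] at h1
    rw [coeffL_R m hm, coeffL_R m hm] at h1
    have hlt : (2:ℤ)^k - 1 < (m:ℤ) := by
      rw [hM]
      have : (2:ℤ)^k < 2^r := by
        exact_mod_cast Nat.pow_lt_pow_right (by norm_num) hkr
      omega
    have hpos : (0:ℤ) < (2:ℤ)^k - 1 := by
      have : (2:ℤ) ≤ 2^k := by
        calc (2:ℤ) = 2^1 := by norm_num
        _ ≤ 2^k := pow_le_pow_right₀ (by norm_num) hk1
      omega
    have hnd : ¬ ((m:ℤ) ∣ (2:ℤ)^k * (0 + 1) - 1) := by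
      intro hd
      have := Int.le_of_dvd (by simpa using hpos) hd
      simp only [zero_add, mul_one] at this
      omega
    rw [if_pos ⟨le_refl 0, dvd_zero _⟩, if_neg (fun h => hnd h.2)] at h1
    exact absurd h1 (by norm_num)
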